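/- Let X, Y be Banach spaces, (T_k) a sequence of linear operators from X to Y, and I a tall ideal on ℕ. Then ∑_k T_k x_k converges in the norm of Y for every sequence (x_k) ∈ c₀₀(X, I) if and only if the set {k ∈ ℕ : T_k ≠ 0} is finite. -/

import Mathlib

open Filter

/-- For a tall ideal `I` on `ℕ`, the series `∑ k, T k (x k)` converges in the norm of `Y`
for every sequence `x` whose support belongs to `I` if and only if only finitely many of the
operators `T k` are nonzero. -/
theorem stmt2 {X Y : Type*} [NormedAddCommGroup X] [NormedSpace ℝ X] [CompleteSpace X]
    [NormedAddCommGroup Y] [NormedSpace ℝ Y] [CompleteSpace Y]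
    (T : ℕ → X →ₗ[ℝ] Y) (I : Set (Set ℕ))
    (hI_sub : ∀ S T : Set ℕ, S ∈ I → T ⊆ S → T ∈ I)
    (hI_union : ∀ S T : Set ℕ, S ∈ I → T ∈ I → S ∪ T ∈ I)
    (hI_fin : ∀ S : Set ℕ, S.Finite → S ∈ I)
    (hI_proper : Set.univ ∉ I)
    (hI_tall : ∀ S : Set ℕ, S.Infinite → ∃ T : Set ℕ, T ⊆ S ∧ T.Infinite ∧ T ∈ I) :
    (∀ x : ℕ → X, {n | x n ≠ 0} ∈ I → ∃ y : Y,
        Tendsto (fun m => ∑ k ∈ Finset.range m, T k (x k)) atTop (nhds y)) ↔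
      {k | T k ≠ 0}.Finite := by
  classical
  constructor
  · intro h
    by_contra hinf
    rw [← Set.not_infinite, not_not] at hinf
    obtain ⟨S, hSsub, hSinf, hSI⟩ := hI_tall _ hinf
    have hv : ∀ k ∈ S, ∃ v : X, T k v ≠ 0 := fun k hk => DFunLike.ne_iff.mp (hSsub hk)
    choose! v hvne using hv
    set x : ℕ → X := fun k => if hk : k ∈ S then (‖T k (v k)‖)⁻¹ • v k else 0 with hx
    have hsupp : {n | x n ≠ 0} ∈ I := by
      apply hI_sub S _ hSI
      intro n hn
      by_contra hns
      simp [hx, hns] at hn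
    obtain ⟨y, hy⟩ := h x hsupp
    have hterm : Tendsto (fun k => T k (x k)) atTop (nhds 0) := by
      have h1 := (hy.comp (tendsto_add_atTop_nat 1)).sub hy
      simp only [Function.comp, Finset.sum_range_succ, add_sub_cancel_left, sub_self] at h1
      exact h1
    have hsmall : ∀ᶠ k in atTop, ‖T k (x k)‖ < 1 := by
      have := hterm.norm
      simp only [norm_zero] at this
      exact this.eventually (eventually_lt_nhds one_pos)
    obtain ⟨N, hN⟩ := eventually_atTop.mp hsmall
    obtain ⟨k, hkS, hkN⟩ := hSinf.exists_gt N
    have hone : ‖T k (x k)‖ = 1 := by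
      have hxk : x k = (‖T k (v k)‖)⁻¹ • v k := by simp [hx, hkS]
      rw [hxk, map_smul, norm_smul, norm_inv, norm_norm,
        inv_mul_cancel₀ (norm_ne_zero_iff.mpr (hvne k hkS))]
    have := hN k hkN.le
    rw [hone] at this
    exact lt_irrefl 1 this
  · intro hfin x hx
    obtain ⟨b, hb⟩ := hfin.bddAbove
    have hzero : ∀ k, b < k → T k = 0 := by
      intro k hk
      by_contra hne
      exact absurd (hb hne) (not_le.mpr hk)
    refine ⟨∑ k ∈ Finset.range (b + 1), T k (x k), tendsto_const_nhds.congr' ?_⟩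
    filter_upwards [eventually_ge_atTop (b + 1)] with m hm
    refine Finset.sum_subset (Finset.range_subset_range.mpr hm) ?_
    intro k _ hk
    rw [hzero k (by simpa using hk)]
    rfl
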